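/- (Graded Favard theorem, positive-definite case.) Let {p̃_n}_{n≥0} be a sequence with p̃_n a column vector of r_n elements of Sym(W), p̃_0 = 1. There exists a positive-definite linear functional ℒ making {p̃_n} an orthonormal basis if and only if the p̃_n satisfy the symmetric recurrence w_{m,i}·p̃_{n−m} = Σ_{k=0}^m M^k_{n,m,i} p̃_{n−m+k} + Σ_{k=1}^m (M^k_{n−k,m,i})^T p̃_{n−m−k} with the matrices A_{n,m,i} = M^m_{n,m,i} of rank r_{n−m} and the stacked matrix A_n of full column rank r_n. -/

import Mathlib

open scoped Classical

/- **Statement 10** (graded Favard theorem, positive-definite case).  Setting as before. -/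

abbrev GIdx (N : ℕ → ℕ) := Σ m : ℕ, Fin (N m)

def tdeg {N : ℕ → ℕ} (α : GIdx N →₀ ℕ) : ℕ := α.sum fun s k => s.1 * k

def Mon (N : ℕ → ℕ) (n : ℕ) := {α : GIdx N →₀ ℕ // tdeg α = n}

def PositiveDefinite {N : ℕ → ℕ} (ℒ : MvPolynomial (GIdx N) ℝ →ₗ[ℝ] ℝ) : Prop :=
  ∃ (ι : Type) (b : Module.Basis ι ℝ (MvPolynomial (GIdx N) ℝ)),
    (∀ i j, i ≠ j → ℒ (b i * b j) = 0) ∧ ∀ i, 0 < ℒ (b i * b i)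

section
variable (N : ℕ → ℕ) [∀ k, Fintype (Mon N k)]

/-- The symmetric recurrence of an orthonormal system for the generator `s = w_{m,i}`:
`w_{m,i}·p̃_{n'} = Σ_{k=0}^m M^k_{n'} p̃_{n'+k} + Σ_{k=1}^m (M^k_{n'-k})ᵀ p̃_{n'-k}`,
the matrices `M n' j` being supported on the band `n' ≤ j ≤ n' + m`. -/
def RecurrenceON (p : (n : ℕ) → Mon N n → MvPolynomial (GIdx N) ℝ)
    (s : GIdx N) (M : (n' j : ℕ) → Matrix (Mon N n') (Mon N j) ℝ) : Prop :=
  (∀ n' j : ℕ, (j < n' ∨ n' + s.1 < j) → M n' j = 0) ∧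
  (∀ (n' : ℕ) (a : Mon N n'),
    MvPolynomial.X s * p n' a =
      (∑ j ∈ Finset.Icc n' (n' + s.1), ∑ b : Mon N j, M n' j a b • p j b) +
      ∑ k ∈ Finset.Icc 1 (min s.1 n'), ∑ b : Mon N (n' - k), M (n' - k) n' b a • p (n' - k) b)

/-- The rank conditions on `A_{n,m,i} = M_{n'}^{n'+m}` and the stacked joint matrix. -/
def RankCondON (s : GIdx N) (M : (n' j : ℕ) → Matrix (Mon N n') (Mon N j) ℝ) : Prop :=
  ∀ n' : ℕ, (M n' (n' + s.1)).rank = Fintype.card (Mon N n')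

def JointRankCondON (MM : (s : GIdx N) → (n' j : ℕ) → Matrix (Mon N n') (Mon N j) ℝ) :
    Prop :=
  ∀ n : ℕ, 1 ≤ n →
    Matrix.rank (fun (r : Σ s : GIdx N, Mon N (n - s.1)) (b : Mon N n) =>
        if r.1.1 ≤ n then MM r.1 (n - r.1.1) n r.2 b else 0) = Fintype.card (Mon N n)

end

namespace FavardAux
open MvPolynomial

variable {N : ℕ → ℕ}

set_option linter.unusedSectionVars false
set_option linter.unusedVariables false

theorem sdeg_pos (hN0 : N 0 = 0) (s : GIdx N) : 1 ≤ s.1 := by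
  rcases s with ⟨m, i⟩
  rcases Nat.eq_zero_or_pos m with h | h
  · subst h; have := i.2; omega
  · exact h

theorem tdeg_zero : tdeg (0 : GIdx N →₀ ℕ) = 0 := by simp [tdeg]

theorem tdeg_add (α β : GIdx N →₀ ℕ) : tdeg (α + β) = tdeg α + tdeg β := by
  unfold tdeg
  apply Finsupp.sum_add_index (by simp) (by intros; ring)

theorem tdeg_single (s : GIdx N) (k : ℕ) : tdeg (Finsupp.single s k) = s.1 * k := by
  unfold tdeg; exact Finsupp.sum_single_index (by simp)

theorem mon0_val (hN0 : N 0 = 0) (a : Mon N 0) : a.1 = 0 := by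
  obtain ⟨α, hα⟩ := a
  show α = 0
  ext s
  by_contra h
  have hs : s ∈ α.support := Finsupp.mem_support_iff.2 h
  have h0 : s.1 * α s = 0 :=
    (Finset.sum_eq_zero_iff (s := α.support) (f := fun s => s.1 * α s)).1 hα s hs
  have h1 := sdeg_pos hN0 s
  rcases Nat.mul_eq_zero.1 h0 with h2 | h2
  · omega
  · exact h h2

def mon0 : Mon N 0 := ⟨0, tdeg_zero⟩

theorem mon0_sub (hN0 : N 0 = 0) (a b : Mon N 0) : a = b :=
  Subtype.ext ((mon0_val hN0 a).trans (mon0_val hN0 b).symm)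

noncomputable def V (N : ℕ → ℕ) (n : ℕ) : Submodule ℝ (MvPolynomial (GIdx N) ℝ) :=
  Submodule.span ℝ {q | ∃ α : GIdx N →₀ ℕ, tdeg α ≤ n ∧ q = MvPolynomial.monomial α (1 : ℝ)}

noncomputable def Vc (N : ℕ → ℕ) (n : ℕ) : Submodule ℝ (MvPolynomial (GIdx N) ℝ) where
  carrier := {q | ∀ α ∈ q.support, tdeg α ≤ n}
  add_mem' := by
    intro a b ha hb α hα
    rcases Finset.mem_union.1 (Finsupp.support_add hα) with h | h
    exacts [ha _ h, hb _ h]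
  zero_mem' := by intro α hα; simp at hα
  smul_mem' := by
    intro c q hq α hα
    exact hq _ (Finsupp.support_smul hα)

theorem V_eq_Vc (n : ℕ) : V N n = Vc N n := by
  apply le_antisymm
  · rw [V, Submodule.span_le]
    rintro q ⟨α, hα, rfl⟩
    intro β hβ
    rw [MvPolynomial.support_monomial] at hβ
    simp only [if_neg (one_ne_zero), Finset.mem_singleton] at hβ
    rwa [hβ]
  · intro q hq
    rw [q.as_sum]
    apply Submodule.sum_mem
    intro α hα
    have h2 : (monomial α) (coeff α q) = (coeff α q) • (monomial α (1:ℝ)) := by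
      rw [MvPolynomial.smul_monomial, smul_eq_mul, mul_one]
    rw [h2]
    exact Submodule.smul_mem _ _ (Submodule.subset_span ⟨α, hq α hα, rfl⟩)

theorem mem_V_iff {n : ℕ} {q : MvPolynomial (GIdx N) ℝ} :
    q ∈ V N n ↔ ∀ α ∈ q.support, tdeg α ≤ n := by rw [V_eq_Vc]; rfl

theorem V_mono {m n : ℕ} (h : m ≤ n) : V N m ≤ V N n := by
  intro q hq
  rw [mem_V_iff] at *
  exact fun α hα => le_trans (hq α hα) h

theorem one_eq_monomial : (1 : MvPolynomial (GIdx N) ℝ) = MvPolynomial.monomial 0 1 := by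
  rw [MvPolynomial.monomial_zero', map_one]

theorem one_mem_V (n : ℕ) : (1 : MvPolynomial (GIdx N) ℝ) ∈ V N n :=
  Submodule.subset_span ⟨0, by rw [tdeg_zero]; omega, one_eq_monomial⟩

theorem X_mul_mem_V {s : GIdx N} {q : MvPolynomial (GIdx N) ℝ} {n : ℕ} (hq : q ∈ V N n) :
    MvPolynomial.X s * q ∈ V N (n + s.1) := by
  rw [mem_V_iff] at *
  intro α hα
  rw [MvPolynomial.support_X_mul] at hα
  rcases Finset.mem_map.1 hα with ⟨β, hβ, rfl⟩
  have h1 : addLeftEmbedding (Finsupp.single s 1) β = Finsupp.single s 1 + β := rfl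
  rw [h1, tdeg_add, tdeg_single, mul_one]
  have := hq β hβ; omega

theorem poly_mem_V (q : MvPolynomial (GIdx N) ℝ) : ∃ n, q ∈ V N n :=
  ⟨q.support.sup tdeg, mem_V_iff.2 fun α hα => Finset.le_sup hα⟩

theorem single_add_sub {α : GIdx N →₀ ℕ} {s : GIdx N} (h : 1 ≤ α s) :
    α = Finsupp.single s 1 + (α - Finsupp.single s 1) := by
  ext t
  rw [Finsupp.add_apply, Finsupp.tsub_apply]
  rcases eq_or_ne t s with rfl | ht
  · rw [Finsupp.single_eq_same]; omega
  · rw [Finsupp.single_eq_of_ne' (Ne.symm ht)]; omega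

theorem monomial_decomp {α : GIdx N →₀ ℕ} {n : ℕ} (hα : tdeg α = n) (hn : 1 ≤ n) :
    ∃ (s : GIdx N) (β : GIdx N →₀ ℕ), s.1 ≤ n ∧ tdeg β = n - s.1 ∧
      (MvPolynomial.monomial α (1:ℝ)) = MvPolynomial.X s * MvPolynomial.monomial β 1 := by
  have hsupp : α.support.Nonempty := by
    by_contra h
    rw [Finset.not_nonempty_iff_eq_empty, Finsupp.support_eq_empty] at h
    rw [h, tdeg_zero] at hα; omega
  obtain ⟨s, hs⟩ := hsupp
  have hαs : 1 ≤ α s := Nat.one_le_iff_ne_zero.2 (Finsupp.mem_support_iff.1 hs)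
  have hdec := single_add_sub (α := α) (s := s) hαs
  have htot : s.1 + tdeg (α - Finsupp.single s 1) = n := by
    rw [← hα]; conv_rhs => rw [hdec]
    rw [tdeg_add, tdeg_single, mul_one]
  refine ⟨s, α - Finsupp.single s 1, by omega, by omega, ?_⟩
  have hX : (MvPolynomial.X s : MvPolynomial (GIdx N) ℝ) = MvPolynomial.monomial (Finsupp.single s 1) 1 := rfl
  rw [hX, MvPolynomial.monomial_mul, one_mul, ← hdec]

theorem rank_eq_card_iff_injective {ρ κ : Type*} [Fintype κ] (A : Matrix ρ κ ℝ) :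
    A.rank = Fintype.card κ ↔ Function.Injective A.mulVecLin := by
  have h := LinearMap.finrank_range_add_finrank_ker A.mulVecLin
  rw [Module.finrank_pi] at h
  constructor
  · intro hr
    rw [← LinearMap.ker_eq_bot]
    rw [Matrix.rank] at hr
    have h0 : Module.finrank ℝ (LinearMap.ker A.mulVecLin) = 0 := by omega
    exact Submodule.finrank_eq_zero.1 h0
  · intro hinj
    rw [Matrix.rank]
    have h0 : LinearMap.ker A.mulVecLin = ⊥ := LinearMap.ker_eq_bot.2 hinj
    rw [h0, finrank_bot] at h
    omega

section WithFintype
variable [∀ k, Fintype (Mon N k)]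

theorem sum_indicator {m m' : ℕ} (f : Mon N m → ℝ) (b : Mon N m') :
    (∑ c : Mon N m, f c * (if h : m = m' then (if h ▸ c = b then 1 else 0) else 0)) =
    (if h : m = m' then f (h.symm ▸ b) else 0) := by
  by_cases h : m = m'
  · subst h
    rw [dif_pos rfl]
    have h2 : ∀ c : Mon N m, f c * (if h' : m = m then (if h' ▸ c = b then 1 else 0) else 0) =
        (if c = b then f c else 0) := by
      intro c; rw [dif_pos rfl]
      by_cases hc : c = b <;> simp [hc]
    rw [Finset.sum_congr rfl (fun c _ => h2 c)]
    exact Finset.sum_ite_eq' Finset.univ b f |>.trans (by simp)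
  · simp [h]

theorem sum_indicator' {m m' : ℕ} (f : Mon N m → ℝ) (a : Mon N m') :
    (∑ c : Mon N m, f c * (if h : m' = m then (if h ▸ a = c then 1 else 0) else 0)) =
    (if h : m' = m then f (h ▸ a) else 0) := by
  by_cases h : m' = m
  · subst h
    rw [dif_pos rfl]
    have h2 : ∀ c : Mon N m', f c * (if h' : m' = m' then (if h' ▸ a = c then 1 else 0) else 0) =
        (if a = c then f c else 0) := by
      intro c; rw [dif_pos rfl]
      by_cases hc : a = c <;> simp [hc]
    rw [Finset.sum_congr rfl (fun c _ => h2 c)]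
    exact Finset.sum_ite_eq Finset.univ a f |>.trans (by simp)
  · simp [h]

end WithFintype

theorem sigma_if {j j₀ : ℕ} (b : Mon N j) (b₀ : Mon N j₀) :
    (if (⟨j, b⟩ : Σ k, Mon N k) = ⟨j₀, b₀⟩ then (1:ℝ) else 0) =
    (if h : j = j₀ then (if h ▸ b = b₀ then 1 else 0) else 0) := by
  by_cases h : j = j₀
  · subst h
    rw [dif_pos rfl]
    by_cases hb : b = b₀
    · subst hb; simp
    · rw [if_neg hb, if_neg]
      intro hc
      exact hb (eq_of_heq (Sigma.mk.inj_iff.1 hc).2)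
  · rw [dif_neg h, if_neg]
    intro hc
    exact h (Sigma.mk.inj_iff.1 hc).1

theorem dite_flip {n k : ℕ} (a : Mon N n) (b : Mon N k) :
    (if h : n = k then (if h ▸ a = b then (1:ℝ) else 0) else 0) =
    (if h : k = n then (if h ▸ b = a then (1:ℝ) else 0) else 0) := by
  by_cases h : n = k
  · subst h
    rw [dif_pos rfl, dif_pos rfl]
    by_cases hb : a = b
    · subst hb; simp
    · rw [if_neg hb, if_neg (Ne.symm hb)]
  · rw [dif_neg h, dif_neg (Ne.symm h)]

theorem sum_dite_nat {t : Finset ℕ} {j₀ : ℕ} (g : (j : ℕ) → Mon N j → ℝ) (b₀ : Mon N j₀) :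
    (∑ j ∈ t, if h : j = j₀ then g j (h.symm ▸ b₀) else 0) = if j₀ ∈ t then g j₀ b₀ else 0 := by
  have h1 : ∀ j ∈ t, (if h : j = j₀ then g j (h.symm ▸ b₀) else 0) = if j = j₀ then g j₀ b₀ else 0 := by
    intro j _
    by_cases h : j = j₀
    · subst h; rw [dif_pos rfl, if_pos rfl]
    · rw [dif_neg h, if_neg h]
  rw [Finset.sum_congr rfl h1, Finset.sum_ite_eq' t j₀ (fun _ => g j₀ b₀)]

theorem sum_dite_sub {t : Finset ℕ} {j₀ n' : ℕ} (hs : ∀ k ∈ t, 1 ≤ k ∧ k ≤ n')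
    (g : (j : ℕ) → Mon N j → ℝ) (b₀ : Mon N j₀) :
    (∑ k ∈ t, if h : n' - k = j₀ then g (n' - k) (h.symm ▸ b₀) else 0) =
    if j₀ < n' ∧ n' - j₀ ∈ t then g j₀ b₀ else 0 := by
  have h1 : ∀ k ∈ t, (if h : n' - k = j₀ then g (n' - k) (h.symm ▸ b₀) else 0)
      = if k = n' - j₀ ∧ j₀ < n' then g j₀ b₀ else 0 := by
    intro k hk
    have hb := hs k hk
    by_cases h : n' - k = j₀
    · rw [dif_pos h, if_pos (by omega)]
      subst h; rfl
    · rw [dif_neg h, if_neg (by omega)]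
  rw [Finset.sum_congr rfl h1]
  by_cases hj : j₀ < n'
  · have h2 : ∀ k ∈ t, (if k = n' - j₀ ∧ j₀ < n' then g j₀ b₀ else 0) = if k = n' - j₀ then g j₀ b₀ else 0 := by
      intro k _; by_cases h : k = n' - j₀ <;> simp [h, hj]
    rw [Finset.sum_congr rfl h2, Finset.sum_ite_eq' t (n' - j₀) (fun _ => g j₀ b₀)]
    simp [hj]
  · have h2 : ∀ k ∈ t, (if k = n' - j₀ ∧ j₀ < n' then g j₀ b₀ else 0) = 0 := by
      intro k _; simp [hj]
    rw [Finset.sum_congr rfl h2]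
    simp [hj]

theorem L_mul_zero (ℒ : MvPolynomial (GIdx N) ℝ →ₗ[ℝ] ℝ) {S : Set (MvPolynomial (GIdx N) ℝ)}
    {r q : MvPolynomial (GIdx N) ℝ}
    (h : ∀ u ∈ S, ℒ (u * r) = 0) (hq : q ∈ Submodule.span ℝ S) : ℒ (q * r) = 0 := by
  induction hq using Submodule.span_induction with
  | mem u hu => exact h u hu
  | zero => simp
  | add u v hu hv hu' hv' => rw [add_mul, map_add, hu', hv', add_zero]
  | smul c u hu hu' => rw [smul_mul_assoc, map_smul, hu', smul_zero]

def spanSet (p : (n : ℕ) → Mon N n → MvPolynomial (GIdx N) ℝ) (n : ℕ) :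
    Set (MvPolynomial (GIdx N) ℝ) := {q | ∃ k ≤ n, ∃ a : Mon N k, q = p k a}

def PP (p : (n : ℕ) → Mon N n → MvPolynomial (GIdx N) ℝ) : (Σ k, Mon N k) → MvPolynomial (GIdx N) ℝ :=
  fun i => p i.1 i.2

end FavardAux

namespace FavardAux
open MvPolynomial

set_option linter.unusedSectionVars false
set_option linter.unusedVariables false
set_option maxHeartbeats 1000000

theorem forward {N : ℕ → ℕ} [∀ k, Fintype (Mon N k)] (hN0 : N 0 = 0)
    (p : (n : ℕ) → Mon N n → MvPolynomial (GIdx N) ℝ)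
    (hp0 : ∀ a : Mon N 0, p 0 a = 1)
    (ℒ : MvPolynomial (GIdx N) ℝ →ₗ[ℝ] ℝ)
    (hspan : ∀ n : ℕ, Submodule.span ℝ (spanSet p n) = V N n)
    (hdiag : ∀ (n : ℕ) (a b : Mon N n), ℒ (p n a * p n b) = if a = b then 1 else 0)
    (hoff : ∀ n k : ℕ, n ≠ k → ∀ (a : Mon N n) (b : Mon N k), ℒ (p n a * p k b) = 0) :
    ∃ MM : (s : GIdx N) → (n' j : ℕ) → Matrix (Mon N n') (Mon N j) ℝ,
      (∀ s : GIdx N, RecurrenceON N p s (MM s) ∧ RankCondON N s (MM s)) ∧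
      JointRankCondON N MM := by
  have horth : ∀ i j : Σ k, Mon N k, ℒ (PP p i * PP p j) = if i = j then 1 else 0 := by
    rintro ⟨n, a⟩ ⟨k, b⟩
    rcases eq_or_ne n k with rfl | hnk
    · show ℒ (p n a * p n b) = _
      rw [hdiag]
      by_cases hab : a = b
      · subst hab; rw [if_pos rfl, if_pos rfl]
      · rw [if_neg hab, if_neg (fun hc => hab (eq_of_heq (Sigma.mk.inj_iff.1 hc).2))]
    · show ℒ (p n a * p k b) = _
      rw [hoff n k hnk, if_neg (fun hc => hnk (Sigma.mk.inj_iff.1 hc).1)]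
  have hind : LinearIndependent ℝ (PP p) := by
    rw [linearIndependent_iff']
    intro t g hsum i hit
    have h0 : ℒ ((∑ j ∈ t, g j • PP p j) * PP p i) = 0 := by rw [hsum, zero_mul, map_zero]
    rw [Finset.sum_mul, map_sum] at h0
    have h1 : ∀ j ∈ t, ℒ ((g j • PP p j) * PP p i) = if j = i then g j else 0 := by
      intro j _
      rw [smul_mul_assoc, map_smul, horth, smul_eq_mul]
      by_cases h : j = i <;> simp [h]
    rw [Finset.sum_congr rfl h1, Finset.sum_ite_eq' t i (fun j => g j), if_pos hit] at h0
    exact h0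
  have hPtop : ⊤ ≤ Submodule.span ℝ (Set.range (PP p)) := by
    intro q _
    obtain ⟨n, hq⟩ := poly_mem_V q
    rw [← hspan n] at hq
    refine Submodule.span_le.2 ?_ hq
    rintro u ⟨k, hk, a, rfl⟩
    exact Submodule.subset_span ⟨⟨k, a⟩, rfl⟩
  let B : Module.Basis (Σ k, Mon N k) ℝ (MvPolynomial (GIdx N) ℝ) := Module.Basis.mk hind hPtop
  have hB : ∀ i, B i = PP p i := fun i => Module.Basis.mk_apply hind hPtop i
  have L1 : ∀ (q : MvPolynomial (GIdx N) ℝ) (i : Σ k, Mon N k), ℒ (q * PP p i) = B.repr q i := by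
    intro q i
    have hfg : (ℒ.comp (LinearMap.mulRight ℝ (PP p i)) : MvPolynomial (GIdx N) ℝ →ₗ[ℝ] ℝ) = B.coord i := by
      refine Module.Basis.ext B fun j => ?_
      rw [LinearMap.comp_apply, LinearMap.mulRight_apply, Module.Basis.coord_apply,
        Module.Basis.repr_self, Finsupp.single_apply, hB j]
      exact horth j i
    exact (LinearMap.congr_fun hfg q : _)
  have pmemV : ∀ (k : ℕ) (a : Mon N k), p k a ∈ V N k := by
    intro k a
    rw [← hspan k]
    exact Submodule.subset_span ⟨k, le_rfl, a, rfl⟩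
  have L2 : ∀ {m j : ℕ}, m < j → ∀ q ∈ V N m, ∀ b : Mon N j, ℒ (q * p j b) = 0 := by
    intro m j hmj q hq b
    rw [← hspan m] at hq
    refine L_mul_zero ℒ ?_ hq
    rintro u ⟨k, hk, a, rfl⟩
    exact hoff k j (by omega) a b
  have himg : ∀ n : ℕ, ⇑B '' {i : Σ k, Mon N k | i.1 ≤ n} = spanSet p n := by
    intro n; ext q
    constructor
    · rintro ⟨i, hi, rfl⟩; exact ⟨i.1, hi, i.2, by rw [hB i]; rfl⟩
    · rintro ⟨k, hk, a, rfl⟩; exact ⟨⟨k, a⟩, hk, by rw [hB]; rfl⟩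
  have hmemV : ∀ (n : ℕ) (q : MvPolynomial (GIdx N) ℝ),
      q ∈ V N n ↔ ∀ i : Σ k, Mon N k, ¬ i.1 ≤ n → B.repr q i = 0 := by
    intro n q
    rw [← hspan n, ← himg n, Module.Basis.mem_span_image]
    constructor
    · intro h i hi
      by_contra h0
      exact hi (h (Finsupp.mem_support_iff.2 h0))
    · intro h i hi
      by_contra h0
      exact Finsupp.mem_support_iff.1 hi (h i h0)
  have hrep : ∀ (j : ℕ) (b : Mon N j) (i : Σ k, Mon N k),
      B.repr (p j b) i = if (⟨j, b⟩ : Σ k, Mon N k) = i then 1 else 0 := by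
    intro j b i
    have h : p j b = B ⟨j, b⟩ := by rw [hB]; rfl
    rw [h, Module.Basis.repr_self, Finsupp.single_apply]
  refine ⟨fun s n' j => if h : n' ≤ j ∧ j ≤ n' + s.1
      then Matrix.of (fun a b => ℒ (MvPolynomial.X s * p n' a * p j b)) else 0,
      fun s => ⟨⟨?_, ?_⟩, ?_⟩, ?_⟩
  -- band condition
  · intro n' j h
    dsimp only
    rw [dif_neg (by omega)]
  -- recurrence
  · intro n' a
    dsimp only
    have hqV : MvPolynomial.X s * p n' a ∈ V N (n' + s.1) := X_mul_mem_V (pmemV n' a)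
    have hS1eq : (∑ j ∈ Finset.Icc n' (n' + s.1), ∑ b : Mon N j,
          (if h : n' ≤ j ∧ j ≤ n' + s.1
            then Matrix.of (fun a b => ℒ (MvPolynomial.X s * p n' a * p j b)) else 0) a b • p j b)
        = ∑ j ∈ Finset.Icc n' (n' + s.1), ∑ b : Mon N j,
            ℒ (MvPolynomial.X s * p n' a * p j b) • p j b := by
      refine Finset.sum_congr rfl fun j hj => Finset.sum_congr rfl fun b _ => ?_
      rw [Finset.mem_Icc] at hj
      rw [dif_pos ⟨hj.1, hj.2⟩]
      rfl
    have hS2eq : (∑ k ∈ Finset.Icc 1 (min s.1 n'), ∑ b : Mon N (n' - k),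
          (if h : n' - k ≤ n' ∧ n' ≤ (n' - k) + s.1
            then Matrix.of (fun a' b' => ℒ (MvPolynomial.X s * p (n' - k) a' * p n' b')) else 0) b a • p (n' - k) b)
        = ∑ k ∈ Finset.Icc 1 (min s.1 n'), ∑ b : Mon N (n' - k),
            ℒ (MvPolynomial.X s * p (n' - k) b * p n' a) • p (n' - k) b := by
      refine Finset.sum_congr rfl fun k hk => Finset.sum_congr rfl fun b _ => ?_
      rw [Finset.mem_Icc] at hk
      rw [dif_pos (by omega)]
      rfl
    rw [hS1eq, hS2eq]
    refine B.ext_elem_iff.2 ?_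
    rintro ⟨j₀, b₀⟩
    rw [← L1 (MvPolynomial.X s * p n' a) ⟨j₀, b₀⟩]
    have hPPeq : PP p (⟨j₀, b₀⟩ : Σ k, Mon N k) = p j₀ b₀ := rfl
    rw [hPPeq]
    rw [map_add]
    rw [Finsupp.add_apply]
    rw [map_sum, map_sum]
    rw [Finset.sum_apply', Finset.sum_apply']
    have hs1 : ∀ j ∈ Finset.Icc n' (n' + s.1),
        (B.repr (∑ b : Mon N j, ℒ (MvPolynomial.X s * p n' a * p j b) • p j b)) ⟨j₀, b₀⟩
        = if h : j = j₀ then ℒ (MvPolynomial.X s * p n' a * p j (h.symm ▸ b₀)) else 0 := by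
      intro j _
      rw [map_sum, Finset.sum_apply']
      have h3 : ∀ b : Mon N j,
          (B.repr (ℒ (MvPolynomial.X s * p n' a * p j b) • p j b)) ⟨j₀, b₀⟩
          = ℒ (MvPolynomial.X s * p n' a * p j b) * (if h : j = j₀ then (if h ▸ b = b₀ then 1 else 0) else 0) := by
        intro b
        rw [map_smul, Finsupp.smul_apply, hrep, smul_eq_mul, sigma_if]
      rw [Finset.sum_congr rfl fun b _ => h3 b]
      exact sum_indicator (fun b => ℒ (MvPolynomial.X s * p n' a * p j b)) b₀
    have hs2 : ∀ k ∈ Finset.Icc 1 (min s.1 n'),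
        (B.repr (∑ b : Mon N (n' - k), ℒ (MvPolynomial.X s * p (n' - k) b * p n' a) • p (n' - k) b)) ⟨j₀, b₀⟩
        = if h : n' - k = j₀ then ℒ (MvPolynomial.X s * p (n' - k) (h.symm ▸ b₀) * p n' a) else 0 := by
      intro k _
      rw [map_sum, Finset.sum_apply']
      have h3 : ∀ b : Mon N (n' - k),
          (B.repr (ℒ (MvPolynomial.X s * p (n' - k) b * p n' a) • p (n' - k) b)) ⟨j₀, b₀⟩
          = ℒ (MvPolynomial.X s * p (n' - k) b * p n' a) * (if h : n' - k = j₀ then (if h ▸ b = b₀ then 1 else 0) else 0) := by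
        intro b
        rw [map_smul, Finsupp.smul_apply, hrep, smul_eq_mul, sigma_if]
      rw [Finset.sum_congr rfl fun b _ => h3 b]
      exact sum_indicator (fun b => ℒ (MvPolynomial.X s * p (n' - k) b * p n' a)) b₀
    rw [Finset.sum_congr rfl hs1, Finset.sum_congr rfl hs2]
    rw [sum_dite_nat (fun j b => ℒ (MvPolynomial.X s * p n' a * p j b)) b₀]
    rw [sum_dite_sub (fun k hk => by rw [Finset.mem_Icc] at hk; omega)
      (fun j b => ℒ (MvPolynomial.X s * p j b * p n' a)) b₀]
    by_cases h1 : n' ≤ j₀ ∧ j₀ ≤ n' + s.1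
    · rw [if_pos (Finset.mem_Icc.2 h1), if_neg (by omega), add_zero]
    · rw [if_neg (fun hc => h1 (Finset.mem_Icc.1 hc)), zero_add]
      by_cases h2 : j₀ < n' ∧ 1 ≤ n' - j₀ ∧ n' - j₀ ≤ min s.1 n'
      · rw [if_pos ⟨h2.1, Finset.mem_Icc.2 ⟨h2.2.1, h2.2.2⟩⟩]
        congr 1; ring
      · rw [if_neg (fun hc => h2 ⟨hc.1, (Finset.mem_Icc.1 hc.2).1, (Finset.mem_Icc.1 hc.2).2⟩)]
        have hcase : n' + s.1 < j₀ ∨ (j₀ < n' ∧ s.1 < n' - j₀) := by omega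
        rcases hcase with hc | hc
        · exact L2 hc _ hqV b₀
        · have heq : MvPolynomial.X s * p n' a * p j₀ b₀ = (MvPolynomial.X s * p j₀ b₀) * p n' a := by ring
          rw [heq]
          exact L2 (by omega) _ (X_mul_mem_V (pmemV j₀ b₀)) a
  -- rank condition
  · intro n'
    dsimp only
    rw [dif_pos ⟨Nat.le_add_right n' s.1, le_rfl⟩]
    rw [← Matrix.rank_transpose, rank_eq_card_iff_injective,
      ← LinearMap.ker_eq_bot, LinearMap.ker_eq_bot']
    intro v hv
    have hv' : ∀ b : Mon N (n' + s.1),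
        ∑ a : Mon N n', v a * ℒ (MvPolynomial.X s * p n' a * p (n' + s.1) b) = 0 := by
      intro b
      have h := congrFun hv b
      simpa [Matrix.mulVecLin_apply, Matrix.mulVec, Matrix.vecMul, dotProduct,
        Matrix.transpose_apply] using h
    set q : MvPolynomial (GIdx N) ℝ := ∑ a : Mon N n', v a • p n' a with hq
    have hqV : q ∈ V N n' := Submodule.sum_mem _ (fun a _ => Submodule.smul_mem _ _ (pmemV n' a))
    have hvL : ∀ a : Mon N n', v a = ℒ (q * p n' a) := by
      intro a
      rw [hq, Finset.sum_mul, map_sum]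
      have h1 : ∀ a' : Mon N n', ℒ ((v a' • p n' a') * p n' a) = if a' = a then v a' else 0 := by
        intro a'
        rw [smul_mul_assoc, map_smul, hdiag, smul_eq_mul]
        by_cases h : a' = a <;> simp [h]
      rw [Finset.sum_congr rfl (fun a' _ => h1 a'), Finset.sum_ite_eq' Finset.univ a (fun a' => v a')]
      simp
    have hq0 : q = 0 := by
      by_contra hqne
      have hXq : MvPolynomial.X s * q ∈ V N (n' + s.1) := X_mul_mem_V hqV
      have hXqtop : ∀ b : Mon N (n' + s.1), ℒ ((MvPolynomial.X s * q) * p (n' + s.1) b) = 0 := by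
        intro b
        have hexp : (MvPolynomial.X s * q) * p (n' + s.1) b
            = ∑ a : Mon N n', v a • (MvPolynomial.X s * p n' a * p (n' + s.1) b) := by
          rw [hq, Finset.mul_sum, Finset.sum_mul]
          refine Finset.sum_congr rfl fun a _ => ?_
          rw [mul_smul_comm, smul_mul_assoc]
        rw [hexp, map_sum, Finset.sum_congr rfl (fun a _ => by rw [map_smul, smul_eq_mul])]
        exact hv' b
      have hXqlow : MvPolynomial.X s * q ∈ V N (n' + s.1 - 1) := by
        rw [hmemV]
        rintro ⟨j, b⟩ hj
        rw [← L1]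
        simp only [not_le] at hj
        have hPP : PP p (⟨j, b⟩ : Σ k, Mon N k) = p j b := rfl
        rw [hPP]
        rcases eq_or_lt_of_le (show n' + s.1 ≤ j by omega) with rfl | hlt
        · exact hXqtop b
        · exact L2 hlt _ hXq b
      have hsup : ∃ α ∈ q.support, tdeg α = n' := by
        by_contra hno
        push_neg at hno
        have hall : ∀ α ∈ q.support, tdeg α ≤ n' := mem_V_iff.1 hqV
        rcases Nat.eq_zero_or_pos n' with h0 | h0
        · obtain ⟨α, hα⟩ := Finset.nonempty_of_ne_empty
            (fun h => hqne (MvPolynomial.support_eq_empty.1 h))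
          exact hno α hα (by have := hall α hα; omega)
        · have hq' : q ∈ V N (n' - 1) := mem_V_iff.2
            (fun α hα => by have h2 := hall α hα; have h3 := hno α hα; omega)
          have hz : ∀ a : Mon N n', v a = 0 := fun a => by
            rw [hvL a]; exact L2 (by omega) _ hq' a
          apply hqne
          rw [hq]
          exact Finset.sum_eq_zero fun a _ => by rw [hz a, zero_smul]
      obtain ⟨α, hα, hαd⟩ := hsup
      have hco : (MvPolynomial.X s * q).coeff (Finsupp.single s 1 + α) ≠ 0 := by
        rw [MvPolynomial.coeff_X_mul]
        exact MvPolynomial.mem_support_iff.1 hα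
      have hmem := mem_V_iff.1 hXqlow _ (MvPolynomial.mem_support_iff.2 hco)
      rw [tdeg_add, tdeg_single, mul_one, hαd] at hmem
      have hs1 := sdeg_pos hN0 s
      omega
    funext a
    have hva : v a = 0 := by rw [hvL a, hq0, zero_mul, map_zero]
    simpa using hva
  -- joint rank condition
  · intro n hn
    refine (rank_eq_card_iff_injective _).2 ?_
    rw [← LinearMap.ker_eq_bot, LinearMap.ker_eq_bot']
    intro v hv
    set q : MvPolynomial (GIdx N) ℝ := ∑ b : Mon N n, v b • p n b with hq
    have hqV : q ∈ V N n := Submodule.sum_mem _ (fun b _ => Submodule.smul_mem _ _ (pmemV n b))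
    have hrows : ∀ (s : GIdx N), s.1 ≤ n → ∀ a : Mon N (n - s.1),
        ℒ ((MvPolynomial.X s * p (n - s.1) a) * q) = 0 := by
      intro s hs a
      have hrow := congrFun hv (⟨s, a⟩ : Σ s : GIdx N, Mon N (n - s.1))
      have hcond : n - s.1 ≤ n ∧ n ≤ (n - s.1) + s.1 := by omega
      have hrow' : ∑ b : Mon N n, ℒ (MvPolynomial.X s * p (n - s.1) a * p n b) * v b = 0 := by
        have hrow2 : (∑ b : Mon N n, (if s.1 ≤ n then
            (if h : n - s.1 ≤ n ∧ n ≤ n - s.1 + s.1 then Matrix.of (fun a b =>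
              ℒ (MvPolynomial.X s * p (n - s.1) a * p n b)) else 0) a b else 0) * v b) = 0 := hrow
        simpa only [if_pos hs, dif_pos hcond, Matrix.of_apply] using hrow2
      have hexp : (MvPolynomial.X s * p (n - s.1) a) * q
          = ∑ b : Mon N n, v b • (MvPolynomial.X s * p (n - s.1) a * p n b) := by
        rw [hq, Finset.mul_sum]
        refine Finset.sum_congr rfl fun b _ => ?_
        rw [mul_smul_comm]
      rw [hexp, map_sum, Finset.sum_congr rfl (fun b _ => by rw [map_smul, smul_eq_mul]),
        ← hrow']
      exact Finset.sum_congr rfl fun b _ => mul_comm _ _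
    have hlow : ∀ u ∈ V N (n - 1), ℒ (u * q) = 0 := by
      intro u hu
      rw [← hspan (n - 1)] at hu
      refine L_mul_zero ℒ ?_ hu
      rintro u' ⟨k, hk, a, rfl⟩
      have hexp : p k a * q = ∑ b : Mon N n, v b • (p k a * p n b) := by
        rw [hq, Finset.mul_sum]
        refine Finset.sum_congr rfl fun b _ => ?_
        rw [mul_smul_comm]
      rw [hexp, map_sum]
      refine Finset.sum_eq_zero fun b _ => ?_
      rw [map_smul, hoff k n (by omega) a b, smul_zero]
    have hXu : ∀ (s : GIdx N), s.1 ≤ n → ∀ u ∈ Submodule.span ℝ (spanSet p (n - s.1)),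
        ℒ ((MvPolynomial.X s * u) * q) = 0 := by
      intro s hs u hu
      induction hu using Submodule.span_induction with
      | mem u hu =>
        obtain ⟨k, hk, a, rfl⟩ := hu
        rcases eq_or_lt_of_le hk with rfl | hlt
        · exact hrows s hs a
        · refine hlow _ (V_mono (by omega) (X_mul_mem_V (pmemV k a)))
      | zero => rw [mul_zero, zero_mul, map_zero]
      | add u w hu hw hu' hw' => rw [mul_add, add_mul, map_add, hu', hw', add_zero]
      | smul c u hu hu' => rw [mul_smul_comm, smul_mul_assoc, map_smul, hu', smul_zero]
    have hmono : ∀ α : GIdx N →₀ ℕ, tdeg α ≤ n → ℒ (MvPolynomial.monomial α 1 * q) = 0 := by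
      intro α hα
      rcases eq_or_lt_of_le hα with heq | hlt
      · obtain ⟨s, β, hs, hβ, hdec⟩ := monomial_decomp heq hn
        rw [hdec]
        have hmem : MvPolynomial.monomial β (1:ℝ) ∈ Submodule.span ℝ (spanSet p (n - s.1)) := by
          rw [hspan (n - s.1)]
          exact Submodule.subset_span ⟨β, le_of_eq hβ, rfl⟩
        exact hXu s hs _ hmem
      · exact hlow _ (Submodule.subset_span ⟨α, by omega, rfl⟩)
    have hqq : ℒ (q * q) = 0 := by
      refine L_mul_zero ℒ ?_ hqV
      rintro u ⟨α, hα, rfl⟩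
      exact hmono α hα
    have hpq : ∀ b : Mon N n, ℒ (p n b * q) = v b := by
      intro b
      have hexp : p n b * q = ∑ b' : Mon N n, v b' • (p n b * p n b') := by
        rw [hq, Finset.mul_sum]
        refine Finset.sum_congr rfl fun b' _ => ?_
        rw [mul_smul_comm]
      rw [hexp, map_sum]
      have h1 : ∀ b' : Mon N n, ℒ (v b' • (p n b * p n b')) = if b' = b then v b' else 0 := by
        intro b'
        rw [map_smul, hdiag, smul_eq_mul]
        by_cases h : b' = b
        · subst h; simp
        · rw [if_neg (fun hc : b = b' => h hc.symm), mul_zero, if_neg h]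
      rw [Finset.sum_congr rfl (fun b' _ => h1 b'), Finset.sum_ite_eq' Finset.univ b (fun b' => v b')]
      simp
    have hsq : ∑ b : Mon N n, v b * v b = 0 := by
      have hexp : q * q = ∑ b : Mon N n, v b • (p n b * q) := by
        conv_lhs => rw [hq, Finset.sum_mul]
        refine Finset.sum_congr rfl fun b _ => ?_
        rw [smul_mul_assoc]
      rw [hexp, map_sum] at hqq
      rw [← hqq]
      refine Finset.sum_congr rfl fun b _ => ?_
      rw [map_smul, hpq b, smul_eq_mul]
    funext b
    have hb := (Finset.sum_eq_zero_iff_of_nonneg (fun b _ => mul_self_nonneg (v b))).1 hsq b (Finset.mem_univ b)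
    simpa using mul_self_eq_zero.1 hb

end FavardAux

namespace FavardAux
open MvPolynomial

set_option linter.unusedSectionVars false
set_option linter.unusedVariables false
set_option maxHeartbeats 2000000
set_option synthInstance.maxHeartbeats 400000

theorem reverse {N : ℕ → ℕ} [∀ k, Fintype (Mon N k)] (hN0 : N 0 = 0)
    (p : (n : ℕ) → Mon N n → MvPolynomial (GIdx N) ℝ)
    (hp0 : ∀ a : Mon N 0, p 0 a = 1)
    (MM : (s : GIdx N) → (n' j : ℕ) → Matrix (Mon N n') (Mon N j) ℝ)
    (hrec : ∀ s : GIdx N, RecurrenceON N p s (MM s))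
    (hjoint : JointRankCondON N MM) :
    ∃ ℒ : MvPolynomial (GIdx N) ℝ →ₗ[ℝ] ℝ, PositiveDefinite ℒ ∧
      (∀ n : ℕ, Submodule.span ℝ (spanSet p n) = V N n) ∧
      (∀ (n : ℕ) (a b : Mon N n), ℒ (p n a * p n b) = if a = b then 1 else 0) ∧
      (∀ n k : ℕ, n ≠ k → ∀ (a : Mon N n) (b : Mon N k), ℒ (p n a * p k b) = 0) := by
  have hsp : ∀ s : GIdx N, 1 ≤ s.1 := sdeg_pos hN0
  -- multiplication by X s stays in the filtration, on the p-span side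
  have hXspan : ∀ (s : GIdx N) (m : ℕ), ∀ u ∈ Submodule.span ℝ (spanSet p m),
      MvPolynomial.X s * u ∈ Submodule.span ℝ (spanSet p (m + s.1)) := by
    intro s m u hu
    induction hu using Submodule.span_induction with
    | mem u hu =>
      obtain ⟨l, hl, a, rfl⟩ := hu
      rw [(hrec s).2 l a]
      refine Submodule.add_mem _ ?_ ?_
      · refine Submodule.sum_mem _ fun j hj => Submodule.sum_mem _ fun b _ =>
          Submodule.smul_mem _ _ ?_
        refine Submodule.subset_span ⟨j, ?_, b, rfl⟩
        rw [Finset.mem_Icc] at hj; omega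
      · refine Submodule.sum_mem _ fun k' hk' => Submodule.sum_mem _ fun b _ =>
          Submodule.smul_mem _ _ ?_
        exact Submodule.subset_span ⟨l - k', by omega, b, rfl⟩
    | zero => rw [mul_zero]; exact Submodule.zero_mem _
    | add u w _ _ hu' hw' => rw [mul_add]; exact Submodule.add_mem _ hu' hw'
    | smul c u _ hu' => rw [mul_smul_comm]; exact Submodule.smul_mem _ _ hu'
  -- the span condition, by strong induction
  have spanP : ∀ n : ℕ, Submodule.span ℝ (spanSet p n) = V N n := by
    intro n
    induction n using Nat.strong_induction_on with
    | _ n IH =>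
    have hpV : ∀ k ≤ n, ∀ a : Mon N k, p k a ∈ V N n := by
      intro k hk a
      rcases Nat.eq_zero_or_pos k with rfl | hk1
      · rw [hp0 a]; exact one_mem_V n
      rcases lt_or_eq_of_le hk with hlt | rfl
      · have h := Submodule.subset_span (R := ℝ) (show p k a ∈ spanSet p k from ⟨k, le_rfl, a, rfl⟩)
        rw [IH k hlt] at h
        exact V_mono (le_of_lt hlt) h
      · -- k = n case via the quotient trick
        have hinj := (rank_eq_card_iff_injective _).1 (hjoint k hk1)
        set π : MvPolynomial (GIdx N) ℝ →ₗ[ℝ] (MvPolynomial (GIdx N) ℝ ⧸ V N k) := (V N k).mkQ with hπdef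
        have hmemtop : ∀ (s : GIdx N), s.1 ≤ k → ∀ a' : Mon N (k - s.1),
            (∑ b : Mon N k, MM s (k - s.1) k a' b • p k b) ∈ V N k := by
          intro s hs a'
          have htop : k - s.1 + s.1 = k := by omega
          have hmemIcc : k ∈ Finset.Icc (k - s.1) (k - s.1 + s.1) := by
            rw [Finset.mem_Icc]; omega
          have hsplit := Finset.sum_eq_sum_sdiff_singleton_add hmemIcc
            (fun j => ∑ b : Mon N j, MM s (k - s.1) j a' b • p j b)
          have hrec' := (hrec s).2 (k - s.1) a'
          have heq : (∑ b : Mon N k, MM s (k - s.1) k a' b • p k b)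
              = MvPolynomial.X s * p (k - s.1) a'
                - (∑ j ∈ Finset.Icc (k - s.1) (k - s.1 + s.1) \ {k},
                    ∑ b : Mon N j, MM s (k - s.1) j a' b • p j b)
                - (∑ k' ∈ Finset.Icc 1 (min s.1 (k - s.1)),
                    ∑ b : Mon N (k - s.1 - k'), MM s (k - s.1 - k') (k - s.1) b a' • p (k - s.1 - k') b) := by
            rw [hrec', hsplit]
            abel
          rw [heq]
          refine Submodule.sub_mem _ (Submodule.sub_mem _ ?_ ?_) ?_
          · have hp' : p (k - s.1) a' ∈ V N (k - s.1) := by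
              have h := Submodule.subset_span (R := ℝ)
                (show p (k - s.1) a' ∈ spanSet p (k - s.1) from ⟨k - s.1, le_rfl, a', rfl⟩)
              rwa [IH (k - s.1) (by have := hsp s; omega)] at h
            have h2 := X_mul_mem_V (s := s) hp'
            rwa [htop] at h2
          · refine Submodule.sum_mem _ fun j hj => Submodule.sum_mem _ fun b _ =>
              Submodule.smul_mem _ _ ?_
            rw [Finset.mem_sdiff, Finset.mem_Icc, Finset.mem_singleton] at hj
            have hjk : j < k := by omega
            have h := Submodule.subset_span (R := ℝ)
              (show p j b ∈ spanSet p j from ⟨j, le_rfl, b, rfl⟩)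
            rw [IH j hjk] at h
            exact V_mono (le_of_lt hjk) h
          · refine Submodule.sum_mem _ fun k' hk' => Submodule.sum_mem _ fun b _ =>
              Submodule.smul_mem _ _ ?_
            rw [Finset.mem_Icc] at hk'
            have hjk : k - s.1 - k' < k := by omega
            have h := Submodule.subset_span (R := ℝ)
              (show p (k - s.1 - k') b ∈ spanSet p (k - s.1 - k') from ⟨k - s.1 - k', le_rfl, b, rfl⟩)
            rw [IH _ hjk] at h
            exact V_mono (le_of_lt hjk) h
        have hπp : ∀ b : Mon N k, π (p k b) = 0 := by
          intro b
          rw [← Module.forall_dual_apply_eq_zero_iff ℝ]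
          intro φ
          have hker : Matrix.mulVecLin
              (fun (r : Σ s : GIdx N, Mon N (k - s.1)) (b : Mon N k) =>
                if r.1.1 ≤ k then MM r.1 (k - r.1.1) k r.2 b else 0)
              (fun b => φ (π (p k b))) = 0 := by
            funext r
            obtain ⟨s, a'⟩ := r
            show (∑ c : Mon N k, (if s.1 ≤ k then MM s (k - s.1) k a' c else 0) * φ (π (p k c))) = 0
            by_cases hs : s.1 ≤ k
            · have h1 : ∀ c : Mon N k, (if s.1 ≤ k then MM s (k - s.1) k a' c else 0) * φ (π (p k c))
                  = φ (π (MM s (k - s.1) k a' c • p k c)) := by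
                intro c
                rw [if_pos hs, map_smul, map_smul, smul_eq_mul]
              rw [Finset.sum_congr rfl fun c _ => h1 c, ← map_sum, ← map_sum]
              have h2 : π (∑ c : Mon N k, MM s (k - s.1) k a' c • p k c) = 0 := by
                rw [hπdef, Submodule.mkQ_apply, Submodule.Quotient.mk_eq_zero]
                exact hmemtop s hs a'
              rw [h2, map_zero]
            · simp [hs]
          have hz := hinj (by rw [hker, map_zero] : Matrix.mulVecLin _ (fun b => φ (π (p k b))) = Matrix.mulVecLin _ 0)
          exact congrFun hz b
        have := hπp a
        rwa [hπdef, Submodule.mkQ_apply, Submodule.Quotient.mk_eq_zero] at this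
    apply le_antisymm
    · rw [Submodule.span_le]
      rintro u ⟨k, hk, a, rfl⟩
      exact hpV k hk a
    · rw [V, Submodule.span_le]
      rintro u ⟨α, hα, rfl⟩
      rcases Nat.eq_zero_or_pos n with rfl | hn1
      · have hα0 : α = 0 := mon0_val hN0 ⟨α, by omega⟩
        subst hα0
        rw [← one_eq_monomial]
        exact Submodule.subset_span ⟨0, le_rfl, mon0, (hp0 mon0).symm⟩
      rcases lt_or_eq_of_le hα with hlt | heq
      · have hm : MvPolynomial.monomial α (1:ℝ) ∈ V N (n-1) :=
          Submodule.subset_span ⟨α, by omega, rfl⟩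
        rw [← IH (n-1) (by omega)] at hm
        exact Submodule.span_mono (fun u hu => by
          obtain ⟨l, hl, a, rfl⟩ := hu; exact ⟨l, by omega, a, rfl⟩) hm
      · obtain ⟨s, β, hs, hβ, hdec⟩ := monomial_decomp heq hn1
        rw [hdec]
        have hmβ : MvPolynomial.monomial β (1:ℝ) ∈ Submodule.span ℝ (spanSet p (n - s.1)) := by
          rw [IH (n - s.1) (by have := hsp s; omega)]
          exact Submodule.subset_span ⟨β, le_of_eq hβ, rfl⟩
        have h2 := hXspan s (n - s.1) _ hmβ
        rwa [Nat.sub_add_cancel hs] at h2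
  have hpV : ∀ (k : ℕ) (a : Mon N k), p k a ∈ V N k := fun k a => by
    rw [← spanP k]; exact Submodule.subset_span ⟨k, le_rfl, a, rfl⟩
  -- dimension count
  have hfinrank : ∀ n : ℕ, Module.finrank ℝ (V N n) = Fintype.card (Σ k : Fin (n+1), Mon N k.1) := by
    intro n
    have hemInj : Function.Injective
        (fun x : Σ k : Fin (n+1), Mon N k.1 => (x.2.1 : GIdx N →₀ ℕ)) := by
      rintro ⟨⟨k, hk⟩, α⟩ ⟨⟨k', hk'⟩, α'⟩ h
      simp only at h
      have hkk0 : ((⟨k, hk⟩ : Fin (n+1)) : ℕ) = ((⟨k', hk'⟩ : Fin (n+1)) : ℕ) := by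
        rw [← α.2, ← α'.2, h]
      have hkk : k = k' := hkk0
      subst hkk
      have : α = α' := Subtype.ext h
      subst this
      rfl
    have hemInd : LinearIndependent ℝ
        (fun x : Σ k : Fin (n+1), Mon N k.1 => MvPolynomial.monomial (R := ℝ) x.2.1 1) := by
      have h1 := (MvPolynomial.basisMonomials (GIdx N) ℝ).linearIndependent
      have h2 := h1.comp _ hemInj
      have h3 : (⇑(MvPolynomial.basisMonomials (GIdx N) ℝ) ∘
          fun x : Σ k : Fin (n+1), Mon N k.1 => (x.2.1 : GIdx N →₀ ℕ))
          = fun x : Σ k : Fin (n+1), Mon N k.1 => MvPolynomial.monomial (R := ℝ) x.2.1 1 := by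
        funext x
        simp [MvPolynomial.coe_basisMonomials]
      rwa [h3] at h2
    have hspanem : V N n = Submodule.span ℝ (Set.range
        (fun x : Σ k : Fin (n+1), Mon N k.1 => MvPolynomial.monomial (R := ℝ) x.2.1 1)) := by
      rw [V]; congr 1; ext q
      constructor
      · rintro ⟨α, hα, rfl⟩
        exact ⟨⟨⟨tdeg α, by omega⟩, ⟨α, rfl⟩⟩, rfl⟩
      · rintro ⟨⟨⟨k, hk⟩, α⟩, rfl⟩
        exact ⟨α.1, by rw [α.2]; omega, rfl⟩
    rw [hspanem, finrank_span_eq_card hemInd]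
  -- per-level linear independence
  have hindn : ∀ n : ℕ, LinearIndependent ℝ (fun x : Σ k : Fin (n+1), Mon N k.1 => p x.1.1 x.2) := by
    intro n
    have hspn : Submodule.span ℝ (Set.range (fun x : Σ k : Fin (n+1), Mon N k.1 => p x.1.1 x.2))
        = V N n := by
      rw [← spanP n]; congr 1; ext q
      constructor
      · rintro ⟨⟨⟨k, hk⟩, a⟩, rfl⟩; exact ⟨k, by omega, a, rfl⟩
      · rintro ⟨k, hk, a, rfl⟩; exact ⟨⟨⟨k, by omega⟩, a⟩, rfl⟩
    set pn' : (Σ k : Fin (n+1), Mon N k.1) → V N n := fun x => ⟨p x.1.1 x.2,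
      by rw [← hspn]; exact Submodule.subset_span ⟨x, rfl⟩⟩ with hpn'
    have htop' : ⊤ ≤ Submodule.span ℝ (Set.range pn') := by
      have hmap : Submodule.map (V N n).subtype (Submodule.span ℝ (Set.range pn'))
          = Submodule.map (V N n).subtype ⊤ := by
        rw [Submodule.map_span, Submodule.map_top, Submodule.range_subtype]
        have hset : (⇑(V N n).subtype '' Set.range pn')
            = Set.range (fun x : Σ k : Fin (n+1), Mon N k.1 => p x.1.1 x.2) := by
          ext q; constructor
          · rintro ⟨u, ⟨x, rfl⟩, rfl⟩; exact ⟨x, rfl⟩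
          · rintro ⟨x, rfl⟩; exact ⟨pn' x, ⟨x, rfl⟩, rfl⟩
        rw [hset, hspn]
      have h2 := Submodule.map_injective_of_injective (V N n).injective_subtype hmap
      rw [h2]
    have hcard : Fintype.card (Σ k : Fin (n+1), Mon N k.1) = Module.finrank ℝ (V N n) :=
      (hfinrank n).symm
    have hind' := linearIndependent_of_top_le_span_of_card_eq_finrank htop' hcard
    have h3 := hind'.map' (V N n).subtype (Submodule.ker_subtype _)
    exact h3
  -- global linear independence
  have hind : LinearIndependent ℝ (PP p) := by
    rw [linearIndependent_iff]
    intro l hl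
    set n := l.support.sup (fun i => i.1) with hn
    have hψinj : Function.Injective
        (fun x : Σ k : Fin (n+1), Mon N k.1 => (⟨x.1.1, x.2⟩ : Σ k, Mon N k)) := by
      rintro ⟨⟨k, hk⟩, a⟩ ⟨⟨k', hk'⟩, a'⟩ h
      obtain ⟨h1, h2⟩ := Sigma.mk.inj_iff.1 h
      subst h1
      obtain rfl := eq_of_heq h2
      rfl
    set ψ : (Σ k : Fin (n+1), Mon N k.1) ↪ (Σ k, Mon N k) :=
      ⟨fun x => ⟨x.1.1, x.2⟩, hψinj⟩ with hψ
    have hsub : ∀ i ∈ l.support, i.1 ≤ n := fun i hi => Finset.le_sup (f := fun i => i.1) hi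
    set l' := Finsupp.comapDomain ψ l (ψ.injective.injOn) with hl'def
    have hl' : l = Finsupp.embDomain ψ l' := by
      ext i
      by_cases hi : i.1 ≤ n
      · have hee : i = ψ ⟨⟨i.1, by omega⟩, i.2⟩ := rfl
        rw [hee, Finsupp.embDomain_apply_self, hl'def, Finsupp.comapDomain_apply]
      · have hnotin : i ∉ Set.range ψ := by
          rintro ⟨x, rfl⟩
          exact hi (by have := x.1.2; simp only [hψ]; show x.1.1 ≤ n; omega)
        rw [Finsupp.embDomain_notin_range _ _ _ hnotin]
        by_contra h0
        exact hi (hsub i (Finsupp.mem_support_iff.2 h0))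
    rw [hl', Finsupp.linearCombination_embDomain] at hl
    have hl'0 : l' = 0 := by
      have := linearIndependent_iff.1 (hindn n) l'
      apply this
      exact hl
    rw [hl', hl'0, Finsupp.embDomain_zero]
  have hPtop : ⊤ ≤ Submodule.span ℝ (Set.range (PP p)) := by
    intro q _
    obtain ⟨n, hq⟩ := poly_mem_V q
    rw [← spanP n] at hq
    refine Submodule.span_le.2 ?_ hq
    rintro u ⟨k, hk, a, rfl⟩
    exact Submodule.subset_span ⟨⟨k, a⟩, rfl⟩
  set B : Module.Basis (Σ k, Mon N k) ℝ (MvPolynomial (GIdx N) ℝ) := Module.Basis.mk hind hPtop with hBdef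
  have hB : ∀ i, B i = PP p i := fun i => by rw [hBdef]; exact Module.Basis.mk_apply hind hPtop i
  set i₀ : Σ k, Mon N k := ⟨0, mon0⟩ with hi₀
  set ℒ : MvPolynomial (GIdx N) ℝ →ₗ[ℝ] ℝ := B.coord i₀ with hℒdef
  have hℒp : ∀ (k : ℕ) (a : Mon N k),
      ℒ (p k a) = if (⟨k, a⟩ : Σ k, Mon N k) = i₀ then 1 else 0 := by
    intro k a
    have h : p k a = B ⟨k, a⟩ := by rw [hB]; rfl
    rw [h, hℒdef, Module.Basis.coord_apply, Module.Basis.repr_self, Finsupp.single_apply]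
  -- orthonormality by strong induction on the smaller degree
  have Q : ∀ k : ℕ, ∀ n : ℕ, k ≤ n → ∀ (a : Mon N n) (b : Mon N k),
      ℒ (p n a * p k b) = if h : n = k then (if h ▸ a = b then 1 else 0) else 0 := by
    intro k
    induction k using Nat.strong_induction_on with
    | _ k IH =>
    rcases Nat.eq_zero_or_pos k with rfl | hk1
    · intro n hn a b
      rw [hp0 b, mul_one, hℒp]
      by_cases h : n = 0
      · subst h
        rw [dif_pos rfl, if_pos (mon0_sub hN0 a b), if_pos]
        rw [hi₀]
        exact congrArg (fun x => (⟨0, x⟩ : Σ k, Mon N k)) (mon0_sub hN0 a mon0)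
      · rw [dif_neg h, if_neg]
        intro hc
        rw [hi₀] at hc
        exact h (Sigma.mk.inj_iff.1 hc).1
    · intro n hn a b
      have hinj := (rank_eq_card_iff_injective _).1 (hjoint k hk1)
      have hrowseq : ∀ (s : GIdx N) (a' : Mon N (k - s.1)), s.1 ≤ k →
          (∑ c : Mon N k, MM s (k - s.1) k a' c * ℒ (p n a * p k c))
          = (if h : n = k then MM s (k - s.1) k a' (h ▸ a) else 0) := by
        intro s a' hs
        have hs1 := hsp s
        have hA : ℒ (p n a * (MvPolynomial.X s * p (k - s.1) a'))
            = ∑ c : Mon N k, MM s (k - s.1) k a' c * ℒ (p n a * p k c) := by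
          conv_lhs => rw [(hrec s).2 (k - s.1) a']
          rw [mul_add, map_add]
          have hmemIcc : k ∈ Finset.Icc (k - s.1) (k - s.1 + s.1) := by
            rw [Finset.mem_Icc]; omega
          rw [Finset.mul_sum, map_sum, Finset.sum_eq_sum_sdiff_singleton_add hmemIcc]
          have htk : ℒ (p n a * ∑ c : Mon N k, MM s (k - s.1) k a' c • p k c)
              = ∑ c : Mon N k, MM s (k - s.1) k a' c * ℒ (p n a * p k c) := by
            rw [Finset.mul_sum, map_sum]
            refine Finset.sum_congr rfl fun c _ => ?_
            rw [mul_smul_comm, map_smul, smul_eq_mul]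
          have hz1 : ∀ j ∈ Finset.Icc (k - s.1) (k - s.1 + s.1) \ {k},
              ℒ (p n a * ∑ c : Mon N j, MM s (k - s.1) j a' c • p j c) = 0 := by
            intro j hj
            rw [Finset.mem_sdiff, Finset.mem_Icc, Finset.mem_singleton] at hj
            have hjk : j < k := by omega
            rw [Finset.mul_sum, map_sum]
            refine Finset.sum_eq_zero fun c _ => ?_
            rw [mul_smul_comm, map_smul, smul_eq_mul]
            rw [IH j hjk n (by omega) a c, dif_neg (by omega), mul_zero]
          have hz2 : ℒ (p n a * ∑ k' ∈ Finset.Icc 1 (min s.1 (k - s.1)),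
              ∑ c : Mon N (k - s.1 - k'), MM s (k - s.1 - k') (k - s.1) c a' • p (k - s.1 - k') c)
              = 0 := by
            rw [Finset.mul_sum, map_sum]
            refine Finset.sum_eq_zero fun k' hk' => ?_
            rw [Finset.mem_Icc] at hk'
            rw [Finset.mul_sum, map_sum]
            refine Finset.sum_eq_zero fun c _ => ?_
            rw [mul_smul_comm, map_smul, smul_eq_mul]
            rw [IH (k - s.1 - k') (by omega) n (by omega) a c, dif_neg (by omega), mul_zero]
          rw [Finset.sum_eq_zero hz1, htk, hz2, zero_add, add_zero]
        have hB2 : ℒ (p n a * (MvPolynomial.X s * p (k - s.1) a'))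
            = if h : n = k then MM s (k - s.1) k a' (h ▸ a) else 0 := by
          have hcomm : p n a * (MvPolynomial.X s * p (k - s.1) a')
              = (MvPolynomial.X s * p n a) * p (k - s.1) a' := by ring
          rw [hcomm]
          conv_lhs => rw [(hrec s).2 n a]
          rw [add_mul, map_add, Finset.sum_mul, map_sum]
          have hz3 : ∀ j ∈ Finset.Icc n (n + s.1),
              ℒ ((∑ c : Mon N j, MM s n j a c • p j c) * p (k - s.1) a') = 0 := by
            intro j hj
            rw [Finset.mem_Icc] at hj
            rw [Finset.sum_mul, map_sum]
            refine Finset.sum_eq_zero fun c _ => ?_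
            rw [smul_mul_assoc, map_smul, smul_eq_mul]
            rw [IH (k - s.1) (by omega) j (by omega) c a', dif_neg (by omega), mul_zero]
          rw [Finset.sum_eq_zero hz3, zero_add, Finset.sum_mul, map_sum]
          have hz4 : ∀ k' ∈ Finset.Icc 1 (min s.1 n),
              ℒ ((∑ c : Mon N (n - k'), MM s (n - k') n c a • p (n - k') c) * p (k - s.1) a')
              = (if h : n - k' = k - s.1 then MM s (n - k') n (h.symm ▸ a') a else 0) := by
            intro k' hk'
            rw [Finset.mem_Icc] at hk'
            rw [Finset.sum_mul, map_sum]
            have h5 : ∀ c : Mon N (n - k'),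
                ℒ ((MM s (n - k') n c a • p (n - k') c) * p (k - s.1) a')
                = MM s (n - k') n c a *
                  (if h : n - k' = k - s.1 then (if h ▸ c = a' then 1 else 0) else 0) := by
              intro c
              rw [smul_mul_assoc, map_smul, smul_eq_mul]
              rw [IH (k - s.1) (by omega) (n - k') (by omega) c a']
            rw [Finset.sum_congr rfl fun c _ => h5 c]
            exact sum_indicator (fun c => MM s (n - k') n c a) a'
          rw [Finset.sum_congr rfl hz4]
          rw [sum_dite_sub (fun k' hk' => by rw [Finset.mem_Icc] at hk'; omega)
            (fun j c => MM s j n c a) a']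
          by_cases hnk : n = k
          · subst hnk
            rw [if_pos ⟨by omega, by rw [Finset.mem_Icc]; omega⟩, dif_pos rfl]
          · have hcneg : ¬ (k - s.1 < n ∧ n - (k - s.1) ∈ Finset.Icc 1 (min s.1 n)) := by
              rintro ⟨hc1, hc2⟩
              rw [Finset.mem_Icc] at hc2
              omega
            rw [if_neg hcneg, dif_neg hnk]
        rw [← hA, hB2]
      have hvw : Matrix.mulVecLin
          (fun (r : Σ s : GIdx N, Mon N (k - s.1)) (c : Mon N k) =>
            if r.1.1 ≤ k then MM r.1 (k - r.1.1) k r.2 c else 0)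
          (fun c => ℒ (p n a * p k c))
          = Matrix.mulVecLin
          (fun (r : Σ s : GIdx N, Mon N (k - s.1)) (c : Mon N k) =>
            if r.1.1 ≤ k then MM r.1 (k - r.1.1) k r.2 c else 0)
          (fun c => if h : n = k then (if h ▸ a = c then 1 else 0) else 0) := by
        funext r
        obtain ⟨s, a'⟩ := r
        show (∑ c : Mon N k, (if s.1 ≤ k then MM s (k - s.1) k a' c else 0) * ℒ (p n a * p k c))
          = ∑ c : Mon N k, (if s.1 ≤ k then MM s (k - s.1) k a' c else 0) *
              (if h : n = k then (if h ▸ a = c then 1 else 0) else 0)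
        by_cases hs : s.1 ≤ k
        · simp only [if_pos hs]
          rw [hrowseq s a' hs, sum_indicator' (fun c => MM s (k - s.1) k a' c) a]
        · simp only [if_neg hs, zero_mul]
      have hvweq := hinj hvw
      exact congrFun hvweq b
  have Orth : ∀ (n k : ℕ) (a : Mon N n) (b : Mon N k),
      ℒ (p n a * p k b) = if h : n = k then (if h ▸ a = b then 1 else 0) else 0 := by
    intro n k a b
    rcases le_total k n with h | h
    · exact Q k n h a b
    · rw [mul_comm, Q n k h b a]
      exact (dite_flip a b).symm
  refine ⟨ℒ, ?_, spanP, ?_, ?_⟩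
  · refine ⟨Σ k : ℕ, Mon N k, B, ?_, ?_⟩
    · rintro ⟨n, a⟩ ⟨k, b⟩ hij
      have hBB : B ⟨n, a⟩ * B ⟨k, b⟩ = p n a * p k b := by rw [hB, hB]; rfl
      rw [hBB, Orth n k a b]
      by_cases hnk : n = k
      · subst hnk
        rw [dif_pos rfl, if_neg]
        intro hc
        exact hij (congrArg (fun x => (⟨n, x⟩ : Σ k, Mon N k)) hc)
      · rw [dif_neg hnk]
    · rintro ⟨n, a⟩
      have hBB : B ⟨n, a⟩ * B ⟨n, a⟩ = p n a * p n a := by rw [hB]; rfl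
      rw [hBB, Orth n n a a, dif_pos rfl, if_pos rfl]
      exact one_pos
  · intro n a b
    rw [Orth n n a b, dif_pos rfl]
  · intro n k hnk a b
    rw [Orth n k a b, dif_neg hnk]



end FavardAux

section
variable (N : ℕ → ℕ) [∀ k, Fintype (Mon N k)]

/-- Favard's theorem, positive-definite case: existence of a
positive-definite linear functional making `{p̃_n}` an orthonormal basis is equivalent to
the symmetric banded recurrence together with the rank conditions. -/
theorem favard_positiveDefinite (hN0 : N 0 = 0)
    (p : (n : ℕ) → Mon N n → MvPolynomial (GIdx N) ℝ)
    (hp0 : ∀ a : Mon N 0, p 0 a = 1) :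
    (∃ ℒ : MvPolynomial (GIdx N) ℝ →ₗ[ℝ] ℝ, PositiveDefinite ℒ ∧
      (∀ n : ℕ,
        Submodule.span ℝ {q | ∃ k ≤ n, ∃ a : Mon N k, q = p k a} =
        Submodule.span ℝ
          {q | ∃ α : GIdx N →₀ ℕ, tdeg α ≤ n ∧ q = MvPolynomial.monomial α (1 : ℝ)}) ∧
      (∀ (n : ℕ) (a b : Mon N n), ℒ (p n a * p n b) = if a = b then 1 else 0) ∧
      (∀ n k : ℕ, n ≠ k → ∀ (a : Mon N n) (b : Mon N k), ℒ (p n a * p k b) = 0)) ↔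
    (∃ MM : (s : GIdx N) → (n' j : ℕ) → Matrix (Mon N n') (Mon N j) ℝ,
      (∀ s : GIdx N, RecurrenceON N p s (MM s) ∧ RankCondON N s (MM s)) ∧
      JointRankCondON N MM) := by
  constructor
  · rintro ⟨ℒ, hPD, hspan, hdiag, hoff⟩
    exact FavardAux.forward hN0 p hp0 ℒ hspan hdiag hoff
  · rintro ⟨MM, h1, h2⟩
    obtain ⟨ℒ, hPD, hspan, hdiag, hoff⟩ :=
      FavardAux.reverse hN0 p hp0 MM (fun s => (h1 s).1) h2
    exact ⟨ℒ, hPD, hspan, hdiag, hoff⟩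

end
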